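/- Every archimedean divisible effect algebra with a compression base having the b-comparability property is strongly archimedean, i.e. for a, b, c ∈ E, if a ≤ b ⊕ (1/n)c for all n ∈ ℕ then a ≤ b. -/

import Mathlib

/- Common definitions: effect algebras, compression bases, spectrality -/

attribute [local instance 0] Classical.propDecidable

universe u

structure EffectAlgebra (E : Type u) where
  padd : E → E → Option E
  zero : E
  one : E
  comm : ∀ a b, padd a b = padd b a
  assoc : ∀ a b c ab abc, padd a b = some ab → padd ab c = some abc →
      ∃ bc, padd b c = some bc ∧ padd a bc = some abc
  orth_exists : ∀ a, ∃ x, padd a x = some one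
  orth_unique : ∀ a x y, padd a x = some one → padd a y = some one → x = y
  add_one : ∀ a b, padd a one = some b → a = zero

namespace EffectAlgebra

variable {E : Type u} (EA : EffectAlgebra E)

/-- `a ⊥ b` and `a ⊕ b = c`. -/
def le (a b : E) : Prop := ∃ c, EA.padd a c = some b

/-- the orthosupplement `a'`. -/
noncomputable def compl (a : E) : E := (EA.orth_exists a).choose

/-- `b ⊖ a` (the element `c` with `a ⊕ c = b`, when it exists). -/
noncomputable def osub (b a : E) : E :=
  if h : ∃ c, EA.padd a c = some b then h.choose else EA.zero

/-- the value of `a ⊕ b` (defaulting to `0` when undefined). -/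
noncomputable def oplusD (a b : E) : E := (EA.padd a b).getD EA.zero

def IsSharp (a : E) : Prop := ∀ x, EA.le x a → EA.le x (EA.compl a) → x = EA.zero

/-- sub-effect algebra. -/
def SubEA (P : Set E) : Prop :=
  EA.zero ∈ P ∧ EA.one ∈ P ∧ (∀ a ∈ P, EA.compl a ∈ P) ∧
    ∀ a ∈ P, ∀ b ∈ P, ∀ c, EA.padd a b = some c → c ∈ P

/-- Mackey compatibility: `a = a₁ ⊕ c`, `b = b₁ ⊕ c` with `a₁ ⊕ b₁ ⊕ c` defined. -/
def Mackey (a b : E) : Prop :=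
  ∃ a1 b1 c d e, EA.padd a1 b1 = some d ∧ EA.padd d c = some e ∧
    EA.padd a1 c = some a ∧ EA.padd b1 c = some b

def Additive (J : E → E) : Prop :=
  ∀ a b c, EA.padd a b = some c → EA.padd (J a) (J b) = some (J c)

def Retraction (J : E → E) : Prop :=
  EA.Additive J ∧ ∀ a, EA.le a (J EA.one) → J a = a

def Compression (J : E → E) : Prop :=
  EA.Retraction J ∧ ∀ a, (J a = EA.zero ↔ EA.le a (EA.compl (J EA.one)))

/-- `I` is a supplement of `J`: `Ker J = ran I` and `Ker I = ran J`. -/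
def Supplement (I J : E → E) : Prop :=
  (∀ a, J a = EA.zero ↔ ∃ b, I b = a) ∧ (∀ a, I a = EA.zero ↔ ∃ b, J b = a)

/-- the `n`-fold sum `n·a`, when defined. -/
def nsmulE : ℕ → E → Option E
  | 0, _ => some EA.zero
  | n + 1, a => (nsmulE n a).bind fun b => EA.padd a b

def ArchimedeanEA : Prop :=
  ∀ a : E, (∀ n : ℕ, ∃ b, EA.nsmulE n a = some b) → a = EA.zero

/-- a state on an effect algebra. -/
def IsState (s : E → ℝ) : Prop :=
  s EA.one = 1 ∧ (∀ a, 0 ≤ s a ∧ s a ≤ 1) ∧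
    ∀ a b c, EA.padd a b = some c → s c = s a + s b

noncomputable def partialSum (f : ℕ → E) : ℕ → E
  | 0 => EA.zero
  | n + 1 => EA.oplusD (partialSum f n) (f n)

/-- σ-additivity of a state: if all partial sums of an orthogonal sequence are defined
and the orthosum (= supremum of the partial sums) exists, the state is countably additive. -/
def SigmaAdditive (s : E → ℝ) : Prop :=
  ∀ f : ℕ → E, ∀ b : E,
    (∀ n, ∃ c, EA.padd (EA.partialSum f n) (f n) = some c) →
    (∀ n, EA.le (EA.partialSum f n) b) →
    (∀ c, (∀ n, EA.le (EA.partialSum f n) c) → EA.le b c) →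
    Filter.Tendsto (fun n => ∑ i ∈ Finset.range n, s (f i)) Filter.atTop (nhds (s b))

/-- A compression base: a family of compressions indexed by a sub-effect algebra `P`
such that each `p ∈ P` is the focus of `J p`, and Mackey compatible projections
compose to a projection. -/
structure CompressionBase {E : Type u} (EA : EffectAlgebra E) where
  P : Set E
  J : E → E → E
  sub : EA.SubEA P
  compr : ∀ p ∈ P, EA.Compression (J p)
  focus : ∀ p ∈ P, J p EA.one = p
  mackey : ∀ p ∈ P, ∀ q ∈ P, EA.Mackey p q → ∃ r ∈ P, J p ∘ J q = J r

variable (CB : CompressionBase EA)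

/-- `a ∈ C(p)`:  `a = J_p(a) ⊕ J_{p'}(a)`. -/
def inC (a p : E) : Prop :=
  EA.padd (CB.J p a) (CB.J (EA.compl p) a) = some a

/-- `PC(a) = {p ∈ P : a ∈ C(p)}`. -/
def PC (a : E) : Set E := {p | p ∈ CB.P ∧ inC EA CB a p}

/-- the bicommutant `P(a)`. -/
def bicomm (a : E) : Set E :=
  {p | p ∈ PC EA CB a ∧ ∀ q ∈ PC EA CB a, inC EA CB p q}

/-- `PC(A)` for a set `A ⊆ E`. -/
def PCset (A : Set E) : Set E := {p | p ∈ CB.P ∧ ∀ a ∈ A, inC EA CB a p}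

/-- `P(Q) = PC(PC(Q) ∪ Q)`. -/
def Pset (Q : Set E) : Set E := PCset EA CB (PCset EA CB Q ∪ Q)

/-- `P_≤(e,f)`. -/
def Ple (e f : E) : Set E :=
  {p | p ∈ Pset EA CB {e, f} ∧ EA.le (CB.J p e) (CB.J p f) ∧
    EA.le (CB.J (EA.compl p) f) (CB.J (EA.compl p) e)}

/-- a Boolean subalgebra of `P`: a sub-effect algebra of `E` contained in `P`
whose elements are pairwise Mackey compatible, with witnesses inside. -/
def BooleanSub (B : Set E) : Prop :=
  B ⊆ CB.P ∧ EA.SubEA B ∧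
    ∀ p ∈ B, ∀ q ∈ B, ∃ p1 ∈ B, ∃ q1 ∈ B, ∃ c ∈ B, ∃ d e,
      EA.padd p1 q1 = some d ∧ EA.padd d c = some e ∧
      EA.padd p1 c = some p ∧ EA.padd q1 c = some q

/-- `a` is a b-element with associated Boolean subalgebra `B`. -/
def IsBElementWith (a : E) (B : Set E) : Prop :=
  BooleanSub EA CB B ∧ ∀ p ∈ CB.P, (inC EA CB a p ↔ ∀ b ∈ B, inC EA CB b p)

def IsBElement (a : E) : Prop := ∃ B, IsBElementWith EA CB a B

def BProperty : Prop := ∀ a : E, IsBElement EA CB a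

/-- commuting of b-elements: `e C f` iff `P(e) ↔ P(f)`. -/
def CommuteEl (e f : E) : Prop :=
  ∀ p ∈ bicomm EA CB e, ∀ q ∈ bicomm EA CB f, EA.Mackey p q

def BComparability : Prop :=
  BProperty EA CB ∧ ∀ e f : E, CommuteEl EA CB e f → (Ple EA CB e f).Nonempty

def IsProjCover (a p : E) : Prop :=
  p ∈ CB.P ∧ ∀ q ∈ CB.P, (EA.le a q ↔ EA.le p q)

def ProjCoverProp : Prop := ∀ a : E, ∃ p, IsProjCover EA CB a p

def Spectral : Prop := ProjCoverProp EA CB ∧ BComparability EA CB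

/-- a block of `P`: a maximal set of pairwise Mackey compatible projections. -/
def IsBlock (B : Set E) : Prop :=
  B ⊆ CB.P ∧ (∀ p ∈ B, ∀ q ∈ B, EA.Mackey p q) ∧
    ∀ B' : Set E, B' ⊆ CB.P → (∀ p ∈ B', ∀ q ∈ B', EA.Mackey p q) → B ⊆ B' → B' = B

/-- the C-block `C(B)`. -/
def Cblock (B : Set E) : Set E := {a | ∀ p ∈ B, inC EA CB a p}

/-- `(f − e)_+` (the positive part, defined when `P_≤(e,f)` is nonempty). -/
noncomputable def posPart (e f : E) : E :=
  if h : (Ple EA CB e f).Nonempty then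
    EA.osub (CB.J h.some f) (CB.J h.some e)
  else EA.zero

noncomputable def projCover (a : E) : E :=
  if h : ∃ p, IsProjCover EA CB a p then h.choose else EA.zero

def IsMeetP (p q m : E) : Prop :=
  m ∈ CB.P ∧ EA.le m p ∧ EA.le m q ∧ ∀ s ∈ CB.P, EA.le s p → EA.le s q → EA.le s m

/-- `p ∧ q` in `P`. -/
noncomputable def pmeet (p q : E) : E :=
  if h : ∃ m, IsMeetP EA CB p q m then h.choose else EA.zero

/-- infimum of a set of projections in `P`. -/
def IsInfP (S : Set E) (m : E) : Prop :=
  m ∈ CB.P ∧ (∀ s ∈ S, EA.le m s) ∧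
    ∀ t ∈ CB.P, (∀ s ∈ S, EA.le t s) → EA.le t m

/-! Relative (to a projection `q`, i.e. computed in the interval `[0,q]`) notions. -/

def Pq (q : E) : Set E := {p | p ∈ CB.P ∧ EA.le p q}

def inCq (q a p : E) : Prop :=
  EA.padd (CB.J p a) (CB.J (EA.osub q p) a) = some a

def PCq (q a : E) : Set E := {p | p ∈ Pq EA CB q ∧ inCq EA CB q a p}

def bicommq (q a : E) : Set E :=
  {p | p ∈ PCq EA CB q a ∧ ∀ r ∈ PCq EA CB q a, inCq EA CB q p r}

def PCsetq (q : E) (A : Set E) : Set E :=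
  {p | p ∈ Pq EA CB q ∧ ∀ a ∈ A, inCq EA CB q a p}

def Psetq (q : E) (Q : Set E) : Set E := PCsetq EA CB q (PCsetq EA CB q Q ∪ Q)

def Pleq (q e f : E) : Set E :=
  {p | p ∈ Psetq EA CB q {e, f} ∧ EA.le (CB.J p e) (CB.J p f) ∧
    EA.le (CB.J (EA.osub q p) f) (CB.J (EA.osub q p) e)}

noncomputable def posPartq (q e f : E) : E :=
  if h : (Pleq EA CB q e f).Nonempty then
    EA.osub (CB.J h.some f) (CB.J h.some e)
  else EA.zero

def IsProjCoverq (q a p : E) : Prop :=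
  p ∈ Pq EA CB q ∧ ∀ s ∈ Pq EA CB q, (EA.le a s ↔ EA.le p s)

noncomputable def projCoverq (q a : E) : E :=
  if h : ∃ p, IsProjCoverq EA CB q a p then h.choose else EA.zero

def Mackeyq (q a b : E) : Prop :=
  ∃ a1 b1 c d e, EA.padd a1 b1 = some d ∧ EA.padd d c = some e ∧ EA.le e q ∧
    EA.padd a1 c = some a ∧ EA.padd b1 c = some b

def SubEAq (q : E) (F : Set E) : Prop :=
  EA.zero ∈ F ∧ q ∈ F ∧ (∀ x ∈ F, EA.osub q x ∈ F) ∧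
    ∀ x ∈ F, ∀ y ∈ F, ∀ z, EA.padd x y = some z → EA.le z q → z ∈ F

def BooleanSubq (q : E) (B : Set E) : Prop :=
  B ⊆ Pq EA CB q ∧ SubEAq EA q B ∧
    ∀ p ∈ B, ∀ r ∈ B, ∃ p1 ∈ B, ∃ r1 ∈ B, ∃ c ∈ B, ∃ d e,
      EA.padd p1 r1 = some d ∧ EA.padd d c = some e ∧ EA.le e q ∧
      EA.padd p1 c = some p ∧ EA.padd r1 c = some r

def IsBElementq (q a : E) : Prop :=
  ∃ B, BooleanSubq EA CB q B ∧
    ∀ p ∈ Pq EA CB q, (inCq EA CB q a p ↔ ∀ b ∈ B, inCq EA CB q b p)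

def BPropertyq (q : E) : Prop := ∀ a : E, EA.le a q → IsBElementq EA CB q a

def CommuteElq (q e f : E) : Prop :=
  ∀ p ∈ bicommq EA CB q e, ∀ r ∈ bicommq EA CB q f, Mackeyq EA q p r

def BComparabilityq (q : E) : Prop :=
  BPropertyq EA CB q ∧ ∀ e f : E, EA.le e q → EA.le f q →
    CommuteElq EA CB q e f → (Pleq EA CB q e f).Nonempty

/-! The binary spectral resolution. -/

/-- `λ(w) = Σ_j w_j 2^{-j}` (head of the list is the first digit). -/
def lamOf : List Bool → ℚ
  | [] => 0
  | b :: t => ((if b then 1 else 0) + lamOf t) / 2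

/-- all binary strings of length `n`, in lexicographic order. -/
def allStrings : ℕ → List (List Bool)
  | 0 => [[]]
  | n + 1 => (allStrings n).flatMap fun w => [w ++ [false], w ++ [true]]

noncomputable def listSum (l : List E) : E :=
  l.foldl (fun acc x => EA.oplusD acc x) EA.zero

/-- the families `(u_w, c_w)`; the binary string is given in reversed order
(head of the list is the last digit). -/
noncomputable def ucAux (a : E) : List Bool → E × E
  | [] => (projCover EA CB a, a)
  | bit :: t =>
      let p := ucAux a t
      let q := p.1
      let cw := p.2
      let cw' := EA.osub q cw
      let d := posPartq EA CB q cw' cw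
      let u0 := pmeet EA CB (EA.osub q (projCoverq EA CB q d)) q
      if bit then (pmeet EA CB q (EA.compl u0), d)
      else (u0, EA.oplusD (CB.J u0 cw) (CB.J u0 cw))

noncomputable def uw (a : E) (w : List Bool) : E := (ucAux EA CB a w.reverse).1

noncomputable def cw (a : E) (w : List Bool) : E := (ucAux EA CB a w.reverse).2

/-- the binary spectral projection `p_{a,λ(w1)}`. -/
noncomputable def pbin (a : E) (w : List Bool) : E :=
  listSum EA (EA.compl (projCover EA CB a) ::
    (((allStrings (w.length + 1)).filter
        fun v => lamOf v ≤ lamOf (w ++ [false])).map (uw EA CB a)))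

def Dyadic01 (x : ℚ) : Prop := ∃ n k : ℕ, (k : ℚ) ≤ 2 ^ n ∧ x = (k : ℚ) / 2 ^ n

/-- the binary spectral resolution `p_{a,λ}`, for dyadic rationals `λ ∈ [0,1]`. -/
noncomputable def pdyad (a : E) (x : ℚ) : E :=
  if x ≤ 0 then EA.compl (projCover EA CB a)
  else if 1 ≤ x then EA.one
  else if h : ∃ w : List Bool, lamOf (w ++ [true]) = x then pbin EA CB a h.choose
  else EA.zero

/-- the rational spectral resolution `p_{a,λ} = ⋀_{μ > λ, μ dyadic} p_{a,μ}`. -/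
noncomputable def ratRes (a : E) (x : ℚ) : E :=
  if h : ∃ m, IsInfP EA CB {y | ∃ μ, Dyadic01 μ ∧ x < μ ∧ y = pdyad EA CB a μ} m
  then h.choose else EA.zero

/-- the partial maps `f_0(b) = 2b`, `f_1(b) = (2b')'` computed in `[0,uu]`. -/
noncomputable def fstep (uu b : E) (bit : Bool) : Option E :=
  if bit then
    (if EA.le (EA.osub uu b) b
      then some (EA.osub uu (EA.oplusD (EA.osub uu b) (EA.osub uu b))) else none)
  else
    (if EA.le b (EA.osub uu b) then some (EA.oplusD b b) else none)

/-- `f_w = f_{w_n} ∘ ⋯ ∘ f_{w_1}`, computed in `[0,uu]`, as a partial map. -/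
noncomputable def fword (uu : E) (w : List Bool) (b : E) : Option E :=
  w.foldl (fun ob bit => ob.bind fun x => fstep EA uu x bit) (some b)

end EffectAlgebra

section StrongArchAux

open EffectAlgebra

variable {E : Type u} {EA : EffectAlgebra E}

theorem sa_compl_spec (EA : EffectAlgebra E) (a : E) :
    EA.padd a (EA.compl a) = some EA.one :=
  (EA.orth_exists a).choose_spec

theorem sa_eq_compl {a x : E} (h : EA.padd a x = some EA.one) : x = EA.compl a :=
  EA.orth_unique a x _ h (sa_compl_spec EA a)

theorem sa_compl_compl (EA : EffectAlgebra E) (a : E) : EA.compl (EA.compl a) = a :=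
  (sa_eq_compl (by rw [EA.comm]; exact sa_compl_spec EA a)).symm

theorem sa_padd_one_zero (EA : EffectAlgebra E) :
    EA.padd EA.one EA.zero = some EA.one := by
  obtain ⟨x, hx⟩ := EA.orth_exists EA.one
  have hx0 : x = EA.zero := EA.add_one x EA.one (by rw [EA.comm]; exact hx)
  rwa [hx0] at hx

theorem sa_padd_zero (EA : EffectAlgebra E) (a : E) : EA.padd a EA.zero = some a := by
  have h1 : EA.padd (EA.compl a) a = some EA.one := by
    rw [EA.comm]; exact sa_compl_spec EA a
  obtain ⟨bc, hbc, habc⟩ := EA.assoc (EA.compl a) a EA.zero EA.one EA.one h1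
    (sa_padd_one_zero EA)
  have : bc = EA.compl (EA.compl a) := sa_eq_compl habc
  rw [sa_compl_compl] at this
  rwa [this] at hbc

theorem sa_zero_padd (EA : EffectAlgebra E) (a : E) : EA.padd EA.zero a = some a := by
  rw [EA.comm]; exact sa_padd_zero EA a

theorem sa_le_refl (EA : EffectAlgebra E) (a : E) : EA.le a a :=
  ⟨EA.zero, sa_padd_zero EA a⟩

theorem sa_le_one (EA : EffectAlgebra E) (a : E) : EA.le a EA.one :=
  ⟨EA.compl a, sa_compl_spec EA a⟩

theorem sa_zero_le (EA : EffectAlgebra E) (a : E) : EA.le EA.zero a :=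
  ⟨a, sa_zero_padd EA a⟩

/-- the other association direction -/
theorem sa_assoc' {a b c bc abc : E} (h1 : EA.padd b c = some bc)
    (h2 : EA.padd a bc = some abc) :
    ∃ ab, EA.padd a b = some ab ∧ EA.padd ab c = some abc := by
  have h1' : EA.padd c b = some bc := by rw [EA.comm]; exact h1
  have h2' : EA.padd bc a = some abc := by rw [EA.comm]; exact h2
  obtain ⟨ba, hba, h3⟩ := EA.assoc c b a bc abc h1' h2'
  exact ⟨ba, by rw [EA.comm]; exact hba, by rw [EA.comm]; exact h3⟩

theorem sa_le_trans {a b c : E} (h1 : EA.le a b) (h2 : EA.le b c) : EA.le a c := by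
  obtain ⟨u, hu⟩ := h1
  obtain ⟨v, hv⟩ := h2
  obtain ⟨uv, _, h⟩ := EA.assoc a u v b c hu hv
  exact ⟨uv, h⟩

theorem sa_cancel {a b c m : E} (h1 : EA.padd a c = some m) (h2 : EA.padd b c = some m) :
    a = b := by
  obtain ⟨cd, hcd, h3⟩ := EA.assoc a c (EA.compl m) m EA.one h1 (sa_compl_spec EA m)
  obtain ⟨cd', hcd', h4⟩ := EA.assoc b c (EA.compl m) m EA.one h2 (sa_compl_spec EA m)
  have hc : cd' = cd := by rw [hcd] at hcd'; exact (Option.some.inj hcd').symm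
  rw [hc] at h4
  have e1 : cd = EA.compl a := sa_eq_compl h3
  have e2 : cd = EA.compl b := sa_eq_compl h4
  have : EA.compl a = EA.compl b := e1 ▸ e2
  calc a = EA.compl (EA.compl a) := (sa_compl_compl EA a).symm
    _ = EA.compl (EA.compl b) := by rw [this]
    _ = b := sa_compl_compl EA b

theorem sa_sum4 {a b c d ab cd s : E} (h1 : EA.padd a b = some ab)
    (h2 : EA.padd c d = some cd) (h3 : EA.padd ab cd = some s) :
    ∃ ac bd, EA.padd a c = some ac ∧ EA.padd b d = some bd ∧ EA.padd ac bd = some s := by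
  obtain ⟨bcd, hbcd, h4⟩ := EA.assoc a b cd ab s h1 h3
  obtain ⟨bc, hbc, h5⟩ := sa_assoc' h2 hbcd
  have hbc' : EA.padd c b = some bc := by rw [EA.comm]; exact hbc
  obtain ⟨bd, hbd, h6⟩ := EA.assoc c b d bc bcd hbc' h5
  obtain ⟨ac, hac, h7⟩ := sa_assoc' h6 h4
  exact ⟨ac, bd, hac, hbd, h7⟩

theorem sa_le_add_le {a b c d s : E} (h1 : EA.le a b) (h2 : EA.le c d)
    (h3 : EA.padd b d = some s) :
    ∃ t, EA.padd a c = some t ∧ EA.le t s := by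
  obtain ⟨u, hu⟩ := h1
  obtain ⟨v, hv⟩ := h2
  obtain ⟨ac, uv, hac, huv, h⟩ := sa_sum4 hu hv h3
  exact ⟨ac, hac, ⟨uv, h⟩⟩

theorem sa_padd_def_of_le_compl {w y : E} (h : EA.le y (EA.compl w)) :
    ∃ t, EA.padd w y = some t := by
  obtain ⟨t, ht, _⟩ := sa_le_add_le (sa_le_refl EA w) h (sa_compl_spec EA w)
  exact ⟨t, ht⟩

theorem sa_cancel_le {w z v wz wv : E} (h1 : EA.padd w z = some wz)
    (h2 : EA.padd w v = some wv) (h3 : EA.le wz wv) : EA.le z v := by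
  obtain ⟨r, hr⟩ := h3
  obtain ⟨zr, hzr, h4⟩ := EA.assoc w z r wz wv h1 hr
  have : zr = v :=
    sa_cancel (c := w) (m := wv) (by rw [EA.comm]; exact h4) (by rw [EA.comm]; exact h2)
  exact ⟨r, this ▸ hzr⟩

theorem sa_add_mono {J : E → E} (hJ : EA.Additive J) {x y : E} (h : EA.le x y) :
    EA.le (J x) (J y) := by
  obtain ⟨cc, hc⟩ := h
  exact ⟨J cc, hJ _ _ _ hc⟩

theorem sa_J_zero {J : E → E} (hJ : EA.Additive J) : J EA.zero = EA.zero := by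
  have h0 : EA.padd (J EA.zero) (J EA.zero) = some (J EA.zero) :=
    hJ _ _ _ (sa_padd_zero EA EA.zero)
  obtain ⟨bc, hbc, h⟩ := EA.assoc (J EA.zero) (J EA.zero) (EA.compl (J EA.zero))
    (J EA.zero) EA.one h0 (sa_compl_spec EA _)
  have : bc = EA.one := Option.some.inj (hbc.symm.trans (sa_compl_spec EA (J EA.zero)))
  rw [this] at h
  exact EA.add_one _ _ h

theorem sa_nsmulE_one (EA : EffectAlgebra E) (w : E) : EA.nsmulE 1 w = some w := by
  show (EA.nsmulE 0 w).bind _ = _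
  show (some EA.zero).bind (fun b => EA.padd w b) = some w
  simp [sa_padd_zero EA w]

theorem sa_nsmulE_two (EA : EffectAlgebra E) (w : E) : EA.nsmulE 2 w = EA.padd w w := by
  show (EA.nsmulE 1 w).bind (fun b => EA.padd w b) = EA.padd w w
  rw [sa_nsmulE_one]
  rfl

theorem sa_J_nsmul {J : E → E} (hJ : EA.Additive J) :
    ∀ n : ℕ, ∀ x cn : E, EA.nsmulE n x = some cn → EA.nsmulE n (J x) = some (J cn) := by
  intro n
  induction n with
  | zero =>
    intro x cn h
    have : cn = EA.zero := (Option.some.inj h).symm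
    subst this
    show some EA.zero = some (J EA.zero)
    rw [sa_J_zero hJ]
  | succ n ih =>
    intro x c h
    have h' : (EA.nsmulE n x).bind (fun b => EA.padd x b) = some c := h
    rw [Option.bind_eq_some_iff] at h'
    obtain ⟨cn, hcn, hadd⟩ := h'
    have ih' := ih x cn hcn
    show (EA.nsmulE n (J x)).bind (fun b => EA.padd (J x) b) = some (J c)
    rw [ih']
    exact hJ _ _ _ hadd

theorem sa_nsmul_mono :
    ∀ n : ℕ, ∀ x w cw : E, EA.le x w → EA.nsmulE n w = some cw →
      ∃ cx, EA.nsmulE n x = some cx ∧ EA.le cx cw := by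
  intro n
  induction n with
  | zero =>
    intro x w cw _ h
    have : cw = EA.zero := (Option.some.inj h).symm
    subst this
    exact ⟨EA.zero, rfl, sa_le_refl EA _⟩
  | succ n ih =>
    intro x w c hle h
    have h' : (EA.nsmulE n w).bind (fun b => EA.padd w b) = some c := h
    rw [Option.bind_eq_some_iff] at h'
    obtain ⟨cw, hcw, hadd⟩ := h'
    obtain ⟨cx, hcx, hlec⟩ := ih x w cw hle hcw
    obtain ⟨t, ht, hts⟩ := sa_le_add_le hle hlec hadd
    refine ⟨t, ?_, hts⟩
    show (EA.nsmulE n x).bind (fun b => EA.padd x b) = some t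
    rw [hcx]
    exact ht

theorem sa_mackey_of_inC (EA : EffectAlgebra E) (CB : CompressionBase EA)
    {p q : E} (hp : p ∈ CB.P) (h : inC EA CB q p) : EA.Mackey p q := by
  have hp' : EA.compl p ∈ CB.P := CB.sub.2.2.1 p hp
  have hJp : EA.Additive (CB.J p) := (CB.compr p hp).1.1
  have hJp' : EA.Additive (CB.J (EA.compl p)) := (CB.compr _ hp').1.1
  set c := CB.J p q with hc
  set q1 := CB.J (EA.compl p) q with hq1
  have hcq : EA.padd c q1 = some q := h
  have hcp : EA.le c p := by
    have := sa_add_mono hJp (sa_le_one EA q)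
    rwa [CB.focus p hp] at this
  have hq1p : EA.le q1 (EA.compl p) := by
    have := sa_add_mono hJp' (sa_le_one EA q)
    rwa [CB.focus _ hp'] at this
  obtain ⟨p1, hp1⟩ := hcp
  obtain ⟨e, he⟩ := sa_padd_def_of_le_compl hq1p
  obtain ⟨d', hd', h5⟩ := EA.assoc c p1 q1 p e hp1 he
  exact ⟨p1, q1, c, d', e, hd', by rw [EA.comm]; exact h5, by rw [EA.comm]; exact hp1,
    by rw [EA.comm]; exact hcq⟩

end StrongArchAux

open EffectAlgebra in
/-- every archimedean divisible effect algebra with a compression base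
having the b-comparability property is strongly archimedean: if `a ≤ b ⊕ (1/n)c` for
all `n ∈ ℕ`, then `a ≤ b`. -/
theorem statement18 {E : Type u} (EA : EffectAlgebra E) (CB : CompressionBase EA)
    (harch : EA.ArchimedeanEA)
    (hdiv : ∀ a : E, ∀ n : ℕ, 0 < n → ∃! x : E, EA.nsmulE n x = some a)
    (hbc : BComparability EA CB) :
    ∀ a b c : E,
      (∀ n : ℕ, 0 < n → ∀ x : E, EA.nsmulE n x = some c →
        ∃ d : E, EA.padd b x = some d ∧ EA.le a d) →
      EA.le a b := by
  intro a b c hyp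
  -- halving
  have Hhalf : ∀ x : E, ∃ t : E, EA.padd t t = some x ∧ ∀ w, EA.padd w w = some x → w = t := by
    intro x
    obtain ⟨t, ht, hu⟩ := hdiv x 2 (by norm_num)
    rw [sa_nsmulE_two] at ht
    exact ⟨t, ht, fun w hw => hu w (show EA.nsmulE 2 w = some x by rw [sa_nsmulE_two]; exact hw)⟩
  choose hf hf1 hf2 using Hhalf
  have half_add : ∀ x y z : E, EA.padd x y = some z →
      EA.padd (hf x) (hf y) = some (hf z) := by
    intro x y z hxy
    obtain ⟨ac, bd, h1, h2, h3⟩ := sa_sum4 (hf1 x) (hf1 y) hxy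
    have hb : ac = bd := Option.some.inj (h1.symm.trans h2)
    rw [← hb] at h3
    have : ac = hf z := hf2 z ac h3
    rw [← this]
    exact h1
  have half_mono : ∀ x y : E, EA.le x y → EA.le (hf x) (hf y) := by
    rintro x y ⟨v, hv⟩
    exact ⟨hf v, half_add _ _ _ hv⟩
  set u := hf EA.one with hu_def
  have huu : EA.padd u u = some EA.one := hf1 EA.one
  have hucompl : u = EA.compl u := sa_eq_compl huu
  have nsmul_half : ∀ n : ℕ, ∀ x cn : E, EA.nsmulE n x = some cn →
      EA.nsmulE n (hf x) = some (hf cn) := by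
    intro n
    induction n with
    | zero =>
      intro x cn h
      have hcn : cn = EA.zero := (Option.some.inj h).symm
      subst hcn
      show some EA.zero = some (hf EA.zero)
      rw [← hf2 EA.zero EA.zero (sa_padd_zero EA EA.zero)]
    | succ n ih =>
      intro x cn h
      have h' : (EA.nsmulE n x).bind (fun b => EA.padd x b) = some cn := h
      rw [Option.bind_eq_some_iff] at h'
      obtain ⟨cm, hcm, hadd⟩ := h'
      have ih' := ih x cm hcm
      show (EA.nsmulE n (hf x)).bind (fun b => EA.padd (hf x) b) = some (hf cn)
      rw [ih']
      exact half_add _ _ _ hadd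
  have hJu : ∀ p, p ∈ CB.P → CB.J p u = hf p := by
    intro p hp
    apply hf2
    have h := (CB.compr p hp).1.1 u u EA.one huu
    rwa [CB.focus p hp] at h
  have hu_inC : ∀ p, p ∈ CB.P → inC EA CB u p := by
    intro p hp
    have hp' : EA.compl p ∈ CB.P := CB.sub.2.2.1 p hp
    show EA.padd (CB.J p u) (CB.J (EA.compl p) u) = some u
    rw [hJu p hp, hJu _ hp']
    exact half_add _ _ _ (sa_compl_spec EA p)
  -- the element s = (1/2)a ⊕ (1/2)b'
  have htu : EA.le (hf a) u := half_mono _ _ (sa_le_one EA a)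
  have hru : EA.le (hf (EA.compl b)) u := half_mono _ _ (sa_le_one EA _)
  obtain ⟨s, hs, -⟩ := sa_le_add_le htu hru huu
  have hbr : EA.padd (hf b) (hf (EA.compl b)) = some u := half_add _ _ _ (sa_compl_spec EA b)
  -- s commutes with u
  have hcomm : CommuteEl EA CB s u := by
    intro p hp q hq
    have hpP : p ∈ CB.P := hp.1.1
    have hpPCu : p ∈ PC EA CB u := ⟨hpP, hu_inC p hpP⟩
    exact sa_mackey_of_inC EA CB hpP (hq.2 p hpPCu)
  obtain ⟨p, hpmem⟩ := hbc.2 s u hcomm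
  obtain ⟨⟨hpP, hall⟩, hle1, hle2⟩ := hpmem
  have hsC : inC EA CB s p := hall s (Set.mem_union_right _ (Set.mem_insert s _))
  have hp'P : EA.compl p ∈ CB.P := CB.sub.2.2.1 p hpP
  have hJp'A : EA.Additive (CB.J (EA.compl p)) := (CB.compr _ hp'P).1.1
  have hJpu : CB.J p u = hf p := hJu p hpP
  have hJp'u : CB.J (EA.compl p) u = hf (EA.compl p) := hJu _ hp'P
  rw [hJp'u] at hle2
  obtain ⟨z, hz⟩ := hle2
  -- z = 0 by the archimedean property
  have hz0 : z = EA.zero := by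
    apply harch
    intro n
    rcases Nat.eq_zero_or_pos n with hn | hn
    · subst hn; exact ⟨EA.zero, rfl⟩
    obtain ⟨x, hx, -⟩ := hdiv c n hn
    obtain ⟨d, hbd, had⟩ := hyp n hn x hx
    have hyu : EA.le (hf x) u := half_mono _ _ (sa_le_one EA x)
    have hyu' : EA.le (hf x) (EA.compl u) := by rw [← hucompl]; exact hyu
    obtain ⟨uy, huy⟩ := sa_padd_def_of_le_compl hyu'
    have hbd2 : EA.padd (hf b) (hf x) = some (hf d) := half_add _ _ _ hbd
    obtain ⟨ry, hry, h5⟩ := EA.assoc (hf b) (hf (EA.compl b)) (hf x) u uy hbr huy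
    have hry' : EA.padd (hf x) (hf (EA.compl b)) = some ry := by rw [EA.comm]; exact hry
    obtain ⟨by', hby, h6⟩ := sa_assoc' hry' h5
    have hby2 : by' = hf d := Option.some.inj (hby.symm.trans hbd2)
    rw [hby2] at h6
    obtain ⟨s', hs', hsle⟩ := sa_le_add_le (half_mono _ _ had)
      (sa_le_refl EA (hf (EA.compl b))) h6
    have hss : s' = s := Option.some.inj (hs'.symm.trans hs)
    rw [hss] at hsle
    have h7 : EA.padd (CB.J (EA.compl p) u) (CB.J (EA.compl p) (hf x)) =
        some (CB.J (EA.compl p) uy) := hJp'A _ _ _ huy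
    rw [hJp'u] at h7
    have h8 : EA.le (CB.J (EA.compl p) s) (CB.J (EA.compl p) uy) := sa_add_mono hJp'A hsle
    have h9 : EA.le z (CB.J (EA.compl p) (hf x)) := sa_cancel_le hz h7 h8
    have h10 : EA.nsmulE n (hf x) = some (hf c) := nsmul_half n x c hx
    have h11 : EA.nsmulE n (CB.J (EA.compl p) (hf x)) =
        some (CB.J (EA.compl p) (hf c)) := sa_J_nsmul hJp'A n _ _ h10
    obtain ⟨cz, hcz, -⟩ := sa_nsmul_mono n z _ _ h9 h11
    exact ⟨cz, hcz⟩
  rw [hz0, sa_padd_zero] at hz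
  have hJp's : CB.J (EA.compl p) s = hf (EA.compl p) := (Option.some.inj hz).symm
  rw [hJpu] at hle1
  have hpp' : EA.padd (hf p) (hf (EA.compl p)) = some u := half_add _ _ _ (sa_compl_spec EA p)
  have hle2' : EA.le (CB.J (EA.compl p) s) (hf (EA.compl p)) := by
    rw [hJp's]; exact sa_le_refl EA _
  obtain ⟨w0, hw0, hw0le⟩ := sa_le_add_le hle1 hle2' hpp'
  have hsC' : EA.padd (CB.J p s) (CB.J (EA.compl p) s) = some s := hsC
  have hw0s : w0 = s := Option.some.inj (hw0.symm.trans hsC')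
  rw [hw0s] at hw0le
  -- from s ≤ u conclude a ≤ b
  obtain ⟨w, hw⟩ := hw0le
  obtain ⟨rw1, hrw1, h12⟩ := EA.assoc (hf a) (hf (EA.compl b)) w s u hs hw
  have hrw1' : EA.padd w (hf (EA.compl b)) = some rw1 := by rw [EA.comm]; exact hrw1
  obtain ⟨tw, htw, h13⟩ := sa_assoc' hrw1' h12
  have htwb : tw = hf b := sa_cancel h13 hbr
  rw [htwb] at htw
  obtain ⟨tt, ww, h14, h15, h16⟩ := sa_sum4 htw htw (hf1 b)
  have htta : tt = a := Option.some.inj (h14.symm.trans (hf1 a))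
  rw [htta] at h16
  exact ⟨ww, h16⟩
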